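/- Under the hypotheses of the linear-convergence theorem for the double-layer fixed point algorithm (conditions (i), (ii), (iii) I_k ∩ Argmax_{j∈J_k} p_j(x^k) ≠ ∅ for every k, (iv) δ_r d(x, C_i) ≤ p_i(x) ≤ Δ_r ‖U_i x − x‖ for all x ∈ B(P_C x^0, r) and i ∈ I with r = d(x^0, C) > 0, and κ_r-linear regularity of the family {C_i} over B(P_C x^0, r)), the limit x^∞ ∈ C satisfies the error bound (δ_r/(2κ_r)) ‖x^k − x^∞‖ ≤ max_{i∈I} p_i(x^k) ≤ Δ_r c_r q_r^k for every k, where q_r := (1 − (ω⁻(2−α⁺)(α⁻)²/(s α⁺)) · (δ_r/(κ_r Δ_r))²)^{1/(2s)} and c_r := 2 d(x^0, C)/q_r^{s−1}. -/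

import Mathlib

open Filter Function Metric Bornology RealInnerProductSpace

private lemma le_infDist' {X : Type*} [PseudoMetricSpace X] {s : Set X} (hs : s.Nonempty)
    {b : ℝ} {x : X} (h : ∀ z ∈ s, b ≤ dist x z) : b ≤ Metric.infDist x s := by
  by_contra hb
  push_neg at hb
  obtain ⟨z, hz, hd⟩ := (Metric.infDist_lt_iff hs).1 hb
  exact absurd (h z hz) (not_le.2 hd)

private lemma arith_key (αminus αplus ωminus δ Δ κ : ℝ) (s : ℕ)
    (hαm0 : 0 < αminus) (hαm1 : αminus ≤ 1) (hαp1 : 1 ≤ αplus) (hαp2 : αplus < 2)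
    (hωm0 : 0 < ωminus) (hωm1 : ωminus ≤ 1) (hδ : 0 < δ) (hδΔ : δ ≤ Δ) (hκ : 1 ≤ κ)
    (hs : 1 ≤ s) :
    (ωminus * (2 - αplus) * αminus ^ 2 / ((s:ℝ) * αplus) * (δ / (κ * Δ)) ^ 2) * κ^2 *
      ((Δ/δ)^2 / (αminus * (2 - αplus) * ωminus) + ((s:ℝ) - 1) * (αplus / (2 - αplus))) ≤ 1 := by
  have hs0 : (0:ℝ) < s := by exact_mod_cast hs
  have h2αp : 0 < 2 - αplus := by linarith
  have hκ0 : (0:ℝ) < κ := by linarith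
  have hΔ0 : (0:ℝ) < Δ := lt_of_lt_of_le hδ hδΔ
  have hαp0 : (0:ℝ) < αplus := by linarith
  set β := ωminus * (2 - αplus) * αminus ^ 2 / ((s:ℝ) * αplus) * (δ / (κ * Δ)) ^ 2 with hβ
  have e1 : β * κ^2 * ((Δ/δ)^2 / (αminus * (2 - αplus) * ωminus)) = αminus/((s:ℝ)*αplus) := by
    rw [hβ]; field_simp
  have e2 : β * κ^2 * (((s:ℝ) - 1) * (αplus / (2 - αplus)))
      = ωminus*αminus^2*((s:ℝ)-1)*δ^2/((s:ℝ)*Δ^2) := by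
    rw [hβ]; field_simp
  have b1 : αminus/((s:ℝ)*αplus) ≤ 1/(s:ℝ) := by
    rw [div_le_div_iff₀ (by positivity) hs0]
    have hs1' : (1:ℝ) ≤ (s:ℝ) := by exact_mod_cast hs
    nlinarith
  have b2 : ωminus*αminus^2*((s:ℝ)-1)*δ^2/((s:ℝ)*Δ^2) ≤ ((s:ℝ)-1)/(s:ℝ) := by
    rw [div_le_div_iff₀ (by positivity) hs0]
    have hs1' : (1:ℝ) ≤ (s:ℝ) := by exact_mod_cast hs
    have hs1 : (0:ℝ) ≤ (s:ℝ) - 1 := by linarith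
    have hδ2 : δ^2 ≤ Δ^2 := by nlinarith
    have h1 : ωminus*αminus^2 ≤ 1 := by nlinarith
    have hωα : ωminus*αminus^2*δ^2 ≤ Δ^2 := by
      calc ωminus*αminus^2*δ^2 ≤ 1*δ^2 := mul_le_mul_of_nonneg_right h1 (sq_nonneg δ)
        _ = δ^2 := one_mul _
        _ ≤ Δ^2 := hδ2
    nlinarith [mul_le_mul_of_nonneg_right hωα (mul_nonneg hs1 hs0.le)]
  have hsum : 1/(s:ℝ) + ((s:ℝ)-1)/(s:ℝ) = 1 := by field_simp; ring
  calc β * κ^2 * ((Δ/δ)^2 / (αminus * (2 - αplus) * ωminus) + ((s:ℝ) - 1) * (αplus / (2 - αplus)))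
      = β * κ^2 * ((Δ/δ)^2 / (αminus * (2 - αplus) * ωminus))
        + β * κ^2 * (((s:ℝ) - 1) * (αplus / (2 - αplus))) := by ring
    _ ≤ 1/(s:ℝ) + ((s:ℝ)-1)/(s:ℝ) := by rw [e1, e2]; exact add_le_add b1 b2
    _ = 1 := hsum

set_option maxHeartbeats 1000000 in
theorem doubleLayer_error_bound
    {H : Type*} [NormedAddCommGroup H] [InnerProductSpace ℝ H] [CompleteSpace H]
    {m : ℕ} [NeZero m]
    (U : Fin m → H → H) (p : Fin m → H → ℝ)
    (hcutter : ∀ i, ∀ x : H, ∀ z ∈ fixedPoints (U i), ⟪x - U i x, z - U i x⟫ ≤ 0)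
    (hpnonneg : ∀ i, ∀ x : H, 0 ≤ p i x)
    (hpfix : ∀ i, fixedPoints (U i) = {x : H | p i x = 0})
    (hC : (⋂ i, fixedPoints (U i)).Nonempty)
    (x : ℕ → H) (Ik Jk : ℕ → Finset (Fin m)) (α : ℕ → ℝ) (ω : ℕ → Fin m → ℝ)
    (hIkne : ∀ k, (Ik k).Nonempty) (hIJ : ∀ k, Ik k ⊆ Jk k)
    (αminus αplus ωminus : ℝ)
    (hαminus : αminus ∈ Set.Ioc (0 : ℝ) 1) (hαplus : αplus ∈ Set.Ico (1 : ℝ) 2)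
    (hωminus : ωminus ∈ Set.Ioc (0 : ℝ) 1)
    (hα : ∀ k, α k ∈ Set.Icc αminus αplus)
    (hω : ∀ k, ∀ i ∈ Ik k, ω k i ∈ Set.Icc ωminus 1)
    (hωsum : ∀ k, ∑ i ∈ Ik k, ω k i = 1)
    (hrec : ∀ k, x (k + 1) = x k + α k • ((∑ i ∈ Ik k, ω k i • U i (x k)) - x k))
    (s : ℕ) (hs : 1 ≤ s)
    (hcover : ∀ k, ∀ i : Fin m, ∃ l < s, i ∈ Jk (k + l))
    (hiii : ∀ k, ∃ i ∈ Ik k, ∀ j ∈ Jk k, p j (x k) ≤ p i (x k))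
    (hr : 0 < infDist (x 0) (⋂ i, fixedPoints (U i)))
    (x0p : H) (hx0p : x0p ∈ ⋂ i, fixedPoints (U i))
    (hx0pproj : ‖x 0 - x0p‖ = infDist (x 0) (⋂ i, fixedPoints (U i)))
    (δ Δ : ℝ) (hδ : 0 < δ) (hΔ : 0 < Δ)
    (hbound : ∀ y ∈ closedBall x0p (infDist (x 0) (⋂ i, fixedPoints (U i))), ∀ i,
      δ * infDist y (fixedPoints (U i)) ≤ p i y ∧ p i y ≤ Δ * ‖U i y - y‖)
    (κ : ℝ) (hκ : 0 < κ)
    (hlinreg : ∀ y ∈ closedBall x0p (infDist (x 0) (⋂ i, fixedPoints (U i))),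
      infDist y (⋂ i, fixedPoints (U i)) ≤
        κ * Finset.univ.sup' Finset.univ_nonempty fun i =>
          infDist y (fixedPoints (U i)))
    (xinf : H) (hxinf : xinf ∈ ⋂ i, fixedPoints (U i))
    (hlim : Tendsto x atTop (nhds xinf)) :
    ∀ k : ℕ,
      δ / (2 * κ) * ‖x k - xinf‖ ≤
        (Finset.univ.sup' Finset.univ_nonempty fun i => p i (x k)) ∧
      (Finset.univ.sup' Finset.univ_nonempty fun i => p i (x k)) ≤
        Δ * (2 * infDist (x 0) (⋂ i, fixedPoints (U i)) /
            ((1 - ωminus * (2 - αplus) * αminus ^ 2 / ((s : ℝ) * αplus) *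
                (δ / (κ * Δ)) ^ 2) ^ ((1 : ℝ) / (2 * (s : ℝ)))) ^ (s - 1)) *
          ((1 - ωminus * (2 - αplus) * αminus ^ 2 / ((s : ℝ) * αplus) *
              (δ / (κ * Δ)) ^ 2) ^ ((1 : ℝ) / (2 * (s : ℝ)))) ^ k := by
  obtain ⟨hαm0, hαm1⟩ := hαminus
  obtain ⟨hαp1, hαp2⟩ := hαplus
  obtain ⟨hωm0, hωm1⟩ := hωminus
  have hαp0 : (0:ℝ) < αplus := by linarith
  have h2αp : (0:ℝ) < 2 - αplus := by linarith
  have hs0 : 0 < s := hs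
  have hsR : (1:ℝ) ≤ (s:ℝ) := by exact_mod_cast hs
  have hsR0 : (0:ℝ) < (s:ℝ) := by linarith
  set C := ⋂ i, fixedPoints (U i) with hCdef
  have hCne : C.Nonempty := hC
  have hCsub : ∀ i, C ⊆ fixedPoints (U i) := fun i => Set.iInter_subset _ i
  have hFixNe : ∀ i, (fixedPoints (U i)).Nonempty := fun i => hCne.mono (hCsub i)
  set r := infDist (x 0) C with hrdef
  -- cutter facts
  have cutterA : ∀ i (y : H), ∀ z ∈ fixedPoints (U i), ‖U i y - y‖^2 ≤ ⟪z - y, U i y - y⟫ := by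
    intro i y z hz
    have h := hcutter i y z hz
    have e1 : z - U i y = (z - y) + (y - U i y) := by abel
    rw [e1, inner_add_right, real_inner_self_eq_norm_sq] at h
    have e2 : ⟪z - y, U i y - y⟫ = -⟪y - U i y, z - y⟫ := by
      rw [real_inner_comm, show U i y - y = -(y - U i y) by abel, inner_neg_left]
    have e3 : ‖y - U i y‖ = ‖U i y - y‖ := norm_sub_rev _ _
    rw [e3] at h
    rw [e2]
    linarith
  have cutterB : ∀ i (y : H), ∀ z ∈ fixedPoints (U i), ‖U i y - y‖ ≤ dist y z := by
    intro i y z hz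
    have h := cutterA i y z hz
    rw [dist_eq_norm]
    rcases eq_or_lt_of_le (norm_nonneg (U i y - y)) with h0 | h0
    · rw [← h0]; exact norm_nonneg _
    · have h1 := real_inner_le_norm (z - y) (U i y - y)
      have h2 : ‖z - y‖ = ‖y - z‖ := norm_sub_rev _ _
      nlinarith
  have cutterC : ∀ i (y : H), ‖U i y - y‖ ≤ infDist y (fixedPoints (U i)) :=
    fun i y => le_infDist' (hFixNe i) (fun z hz => cutterB i y z hz)
  -- basic weights
  have hωnn : ∀ k, ∀ i ∈ Ik k, 0 ≤ ω k i := fun k i hi => le_trans hωm0.le (hω k i hi).1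
  set S : ℕ → ℝ := fun k => ∑ i ∈ Ik k, ω k i * ‖U i (x k) - x k‖^2 with hSdef
  have hSnn : ∀ k, 0 ≤ S k := fun k =>
    Finset.sum_nonneg fun i hi => mul_nonneg (hωnn k i hi) (sq_nonneg _)
  set D : ℕ → ℝ := fun k => α k * (2 - α k) * S k with hDdef
  have hαk : ∀ k, 0 < α k ∧ α k < 2 := fun k =>
    ⟨lt_of_lt_of_le hαm0 (hα k).1, lt_of_le_of_lt (hα k).2 hαp2⟩
  have hDnn : ∀ k, 0 ≤ D k := fun k =>
    mul_nonneg (mul_nonneg (hαk k).1.le (by linarith [(hαk k).2])) (hSnn k)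
  -- recursion rewritten
  have hu : ∀ k, x (k+1) = x k + α k • (∑ i ∈ Ik k, ω k i • (U i (x k) - x k)) := by
    intro k
    rw [hrec k]
    congr 2
    simp_rw [smul_sub]
    rw [Finset.sum_sub_distrib, ← Finset.sum_smul, hωsum, one_smul]
  -- v bounds
  have hv2 : ∀ k, ‖∑ i ∈ Ik k, ω k i • (U i (x k) - x k)‖^2 ≤ S k := by
    intro k
    set v := ∑ i ∈ Ik k, ω k i • (U i (x k) - x k) with hv
    have h1 : ‖v‖ ≤ ∑ i ∈ Ik k, ω k i * ‖U i (x k) - x k‖ := by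
      refine (norm_sum_le _ _).trans (le_of_eq ?_)
      refine Finset.sum_congr rfl fun i hi => ?_
      rw [norm_smul, Real.norm_eq_abs, abs_of_nonneg (hωnn k i hi)]
    have h2 : (∑ i ∈ Ik k, ω k i * ‖U i (x k) - x k‖)^2 ≤ (∑ i ∈ Ik k, ω k i) * S k := by
      have hcs := Finset.sum_mul_sq_le_sq_mul_sq (Ik k) (fun i => Real.sqrt (ω k i))
        (fun i => Real.sqrt (ω k i) * ‖U i (x k) - x k‖)
      have e1 : ∑ i ∈ Ik k, Real.sqrt (ω k i) * (Real.sqrt (ω k i) * ‖U i (x k) - x k‖)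
          = ∑ i ∈ Ik k, ω k i * ‖U i (x k) - x k‖ := by
        refine Finset.sum_congr rfl fun i hi => ?_
        rw [← mul_assoc, Real.mul_self_sqrt (hωnn k i hi)]
      have e2 : ∑ i ∈ Ik k, (Real.sqrt (ω k i))^2 = ∑ i ∈ Ik k, ω k i :=
        Finset.sum_congr rfl fun i hi => Real.sq_sqrt (hωnn k i hi)
      have e3 : ∑ i ∈ Ik k, (Real.sqrt (ω k i) * ‖U i (x k) - x k‖)^2 = S k := by
        refine Finset.sum_congr rfl fun i hi => ?_
        rw [mul_pow, Real.sq_sqrt (hωnn k i hi)]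
      rw [e1, e2, e3] at hcs
      exact hcs
    rw [hωsum, one_mul] at h2
    calc ‖v‖^2 ≤ (∑ i ∈ Ik k, ω k i * ‖U i (x k) - x k‖)^2 :=
          pow_le_pow_left₀ (norm_nonneg _) h1 2
      _ ≤ S k := h2
  -- main step inequality
  have hstep : ∀ k, ∀ z ∈ C, ‖x (k+1) - z‖^2 ≤ ‖x k - z‖^2 - D k := by
    intro k z hz
    show ‖x (k+1) - z‖^2 ≤ ‖x k - z‖^2 - α k * (2 - α k) * S k
    set v := ∑ i ∈ Ik k, ω k i • (U i (x k) - x k) with hv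
    have hv1 : S k ≤ ⟪z - x k, v⟫ := by
      rw [hv, inner_sum]
      refine Finset.sum_le_sum fun i hi => ?_
      rw [real_inner_smul_right]
      exact mul_le_mul_of_nonneg_left (cutterA i (x k) z (hCsub i hz)) (hωnn k i hi)
    have hexp : ‖x (k+1) - z‖^2 = ‖x k - z‖^2 + 2*(α k*⟪x k - z,v⟫) + (α k)^2*‖v‖^2 := by
      rw [hu k, show x k + α k • v - z = (x k - z) + α k • v by abel,
        norm_add_sq_real, real_inner_smul_right, norm_smul, Real.norm_eq_abs, mul_pow, sq_abs]
    have hav : ⟪x k - z, v⟫ ≤ -S k := by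
      have e : ⟪z - x k, v⟫ = -⟪x k - z, v⟫ := by
        rw [show z - x k = -(x k - z) by abel, inner_neg_left]
      rw [e] at hv1
      linarith
    have h1 := (hαk k).1
    have h2 := (hαk k).2
    rw [hexp]
    have hvv := hv2 k
    nlinarith [mul_le_mul_of_nonneg_left hav h1.le,
      mul_le_mul_of_nonneg_left hvv (sq_nonneg (α k))]
  -- step size bound
  have he : ∀ k, ‖x (k+1) - x k‖^2 ≤ (α k)^2 * S k := by
    intro k
    rw [hu k, show x k + α k • (∑ i ∈ Ik k, ω k i • (U i (x k) - x k)) - x k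
      = α k • (∑ i ∈ Ik k, ω k i • (U i (x k) - x k)) by abel,
      norm_smul, Real.norm_eq_abs, mul_pow, sq_abs]
    exact mul_le_mul_of_nonneg_left (hv2 k) (sq_nonneg _)
  -- D lower bounds
  have hD_e : ∀ k, (2 - αplus)/αplus * ‖x (k+1) - x k‖^2 ≤ D k := by
    intro k
    have h1 := (hαk k).1
    have h2 := (hαk k).2
    have hek := he k
    have hα1 := (hα k).1
    have hα2 := (hα k).2
    show (2 - αplus)/αplus * ‖x (k+1) - x k‖^2 ≤ α k * (2 - α k) * S k
    have key : (2 - αplus)/αplus * (α k)^2 ≤ α k * (2 - α k) := by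
      rw [div_mul_eq_mul_div, div_le_iff₀ hαp0]
      nlinarith
    calc (2 - αplus)/αplus * ‖x (k+1) - x k‖^2 ≤ (2 - αplus)/αplus * ((α k)^2 * S k) :=
          mul_le_mul_of_nonneg_left hek (by positivity)
      _ = (2 - αplus)/αplus * (α k)^2 * S k := by ring
      _ ≤ α k * (2 - α k) * S k := mul_le_mul_of_nonneg_right key (hSnn k)
  have hD_a : ∀ k, ∀ i ∈ Ik k, αminus*(2-αplus)*ωminus * ‖U i (x k) - x k‖^2 ≤ D k := by
    intro k i hi
    have hSi : ωminus * ‖U i (x k) - x k‖^2 ≤ S k := by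
      refine le_trans ?_ (Finset.single_le_sum
        (fun j hj => mul_nonneg (hωnn k j hj) (sq_nonneg _)) hi)
      exact mul_le_mul_of_nonneg_right (hω k i hi).1 (sq_nonneg _)
    have hα1 := (hα k).1
    have hα2 := (hα k).2
    have key : αminus*(2-αplus) ≤ α k * (2 - α k) := by nlinarith
    show αminus*(2-αplus)*ωminus * ‖U i (x k) - x k‖^2 ≤ α k * (2 - α k) * S k
    calc αminus*(2-αplus)*ωminus * ‖U i (x k) - x k‖^2
        = αminus*(2-αplus) * (ωminus * ‖U i (x k) - x k‖^2) := by ring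
      _ ≤ αminus*(2-αplus) * S k :=
          mul_le_mul_of_nonneg_left hSi (by positivity)
      _ ≤ α k * (2 - α k) * S k := mul_le_mul_of_nonneg_right key (hSnn k)
  -- Fejér monotonicity
  have hfe : ∀ k, ∀ z ∈ C, ‖x (k+1) - z‖ ≤ ‖x k - z‖ := by
    intro k z hz
    have h := hstep k z hz
    have hD := hDnn k
    have h2 : ‖x (k+1) - z‖^2 ≤ ‖x k - z‖^2 := by linarith
    calc ‖x (k+1) - z‖ = Real.sqrt (‖x (k+1) - z‖^2) := (Real.sqrt_sq (norm_nonneg _)).symm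
      _ ≤ Real.sqrt (‖x k - z‖^2) := Real.sqrt_le_sqrt h2
      _ = ‖x k - z‖ := Real.sqrt_sq (norm_nonneg _)
  have hfe' : ∀ z ∈ C, ∀ k j, k ≤ j → ‖x j - z‖ ≤ ‖x k - z‖ := by
    intro z hz k j hkj
    induction j, hkj using Nat.le_induction with
    | base => exact le_rfl
    | succ n hn ih => exact le_trans (hfe n z hz) ih
  have hball : ∀ k, x k ∈ closedBall x0p r := by
    intro k
    rw [mem_closedBall, dist_eq_norm]
    calc ‖x k - x0p‖ ≤ ‖x 0 - x0p‖ := hfe' x0p hx0p 0 k (Nat.zero_le k)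
      _ = r := hx0pproj
  -- infDist monotone
  have hrrmono : ∀ k j, k ≤ j → infDist (x j) C ≤ infDist (x k) C := by
    intro k j hkj
    refine le_infDist' hCne fun z hz => ?_
    calc infDist (x j) C ≤ dist (x j) z := infDist_le_dist_of_mem hz
      _ ≤ dist (x k) z := by
          rw [dist_eq_norm, dist_eq_norm]; exact hfe' z hz k j hkj
  have hrrnn : ∀ k, 0 ≤ infDist (x k) C := fun _ => infDist_nonneg
  -- kappa >= 1 and delta <= Delta
  have hx0ball : x 0 ∈ closedBall x0p r := hball 0
  have hsupd_le : ∀ k, (Finset.univ.sup' Finset.univ_nonempty fun i =>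
      infDist (x k) (fixedPoints (U i))) ≤ infDist (x k) C := by
    intro k
    refine Finset.sup'_le _ _ fun i _ => ?_
    exact infDist_le_infDist_of_subset (hCsub i) hCne
  have hκ1 : 1 ≤ κ := by
    have h1 := hlinreg (x 0) hx0ball
    have h2 := hsupd_le 0
    nlinarith [mul_le_mul_of_nonneg_left h2 hκ.le]
  have hδΔ : δ ≤ Δ := by
    obtain ⟨istar, -, hsup⟩ := Finset.exists_mem_eq_sup' (Finset.univ_nonempty (α := Fin m))
      (fun i => infDist (x 0) (fixedPoints (U i)))
    have h1 := hlinreg (x 0) hx0ball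
    rw [hsup] at h1
    have hdpos : 0 < infDist (x 0) (fixedPoints (U istar)) := by
      by_contra hcon
      push_neg at hcon
      have h0 : infDist (x 0) (fixedPoints (U istar)) = 0 := le_antisymm hcon infDist_nonneg
      rw [h0, mul_zero] at h1
      linarith
    have hb := hbound (x 0) hx0ball istar
    have hUd := cutterC istar (x 0)
    have hchain : δ * infDist (x 0) (fixedPoints (U istar))
        ≤ Δ * infDist (x 0) (fixedPoints (U istar)) :=
      le_trans hb.1 (le_trans hb.2 (mul_le_mul_of_nonneg_left hUd hΔ.le))
    exact le_of_mul_le_mul_right hchain hdpos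
  -- beta and q
  set β : ℝ := ωminus * (2 - αplus) * αminus ^ 2 / ((s:ℝ) * αplus) * (δ / (κ * Δ)) ^ 2 with hβdef
  set q : ℝ := (1 - β) ^ ((1:ℝ) / (2 * (s:ℝ))) with hqdef
  have hβnn : 0 ≤ β := by
    rw [hβdef]
    apply mul_nonneg (div_nonneg (mul_nonneg (mul_nonneg hωm0.le h2αp.le) (sq_nonneg αminus)) (by positivity)) (sq_nonneg _)
  have hβs : β ≤ 1/(s:ℝ) := by
    have hfrac : (δ/(κ*Δ))^2 ≤ 1 := by
      have hδκΔ : δ ≤ κ*Δ := by nlinarith [mul_le_mul_of_nonneg_right hκ1 hΔ.le]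
      rw [div_pow]
      apply div_le_one_of_le₀
      · exact pow_le_pow_left₀ hδ.le hδκΔ 2
      · positivity
    have hfacnn : 0 ≤ ωminus * (2 - αplus) * αminus ^ 2 / ((s:ℝ) * αplus) :=
      div_nonneg (mul_nonneg (mul_nonneg hωm0.le h2αp.le) (sq_nonneg αminus)) (by positivity)
    have hfac : ωminus * (2 - αplus) * αminus ^ 2 / ((s:ℝ) * αplus) ≤ 1/(s:ℝ) := by
      rw [div_le_div_iff₀ (by positivity) hsR0]
      have ha2 : αminus^2 ≤ 1 := by nlinarith
      have h0 : ωminus * (2 - αplus) ≤ 1 := mul_le_one₀ hωm1 h2αp.le (by linarith)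
      have h1 : ωminus * (2 - αplus) * αminus ^ 2 ≤ 1 :=
        mul_le_one₀ h0 (sq_nonneg αminus) ha2
      nlinarith [mul_le_mul_of_nonneg_right h1 hsR0.le]
    rw [hβdef]
    calc ωminus * (2 - αplus) * αminus ^ 2 / ((s:ℝ) * αplus) * (δ / (κ * Δ)) ^ 2
        ≤ ωminus * (2 - αplus) * αminus ^ 2 / ((s:ℝ) * αplus) * 1 :=
          mul_le_mul_of_nonneg_left hfrac hfacnn
      _ = ωminus * (2 - αplus) * αminus ^ 2 / ((s:ℝ) * αplus) := mul_one _
      _ ≤ 1/(s:ℝ) := hfac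
  have hβ1 : β ≤ 1 := le_trans hβs (by rw [div_le_one hsR0]; exact hsR)
  have h1β : 0 ≤ 1 - β := by linarith
  have hq0 : 0 ≤ q := by rw [hqdef]; exact Real.rpow_nonneg h1β _
  have hq1 : q ≤ 1 := by
    rw [hqdef]
    exact Real.rpow_le_one h1β (by linarith) (by positivity)
  have hqs : q ^ s = Real.sqrt (1 - β) := by
    rw [hqdef, ← Real.rpow_natCast ((1-β) ^ ((1:ℝ) / (2 * (s:ℝ)))) s,
      ← Real.rpow_mul h1β, Real.sqrt_eq_rpow]
    congr 1
    field_simp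
  -- telescoping
  have htel : ∀ z ∈ C, ∀ k n, ‖x (k+n) - z‖^2 + (∑ t ∈ Finset.range n, D (k+t)) ≤ ‖x k - z‖^2 := by
    intro z hz k n
    induction n with
    | zero => simp
    | succ n ih =>
      rw [Finset.sum_range_succ]
      have h := hstep (k+n) z hz
      have hidx : k + (n+1) = (k+n)+1 := rfl
      rw [hidx]
      linarith
  -- block bound
  have hblock : ∀ k, β * (infDist (x k) C)^2 ≤ ∑ t ∈ Finset.range s, D (k+t) := by
    intro k
    obtain ⟨istar, -, hsup⟩ := Finset.exists_mem_eq_sup' (Finset.univ_nonempty (α := Fin m))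
      (fun i => infDist (x k) (fixedPoints (U i)))
    obtain ⟨l, hls, hmem⟩ := hcover k istar
    obtain ⟨imax, himaxI, himax⟩ := hiii (k+l)
    set a := ‖U imax (x (k+l)) - x (k+l)‖ with hadef
    have hann : 0 ≤ a := norm_nonneg _
    set d := infDist (x k) (fixedPoints (U istar)) with hddef
    have hdnn : 0 ≤ d := infDist_nonneg
    have hchain : d ≤ (∑ t ∈ Finset.range l, ‖x (k+t+1) - x (k+t)‖) + (Δ/δ) * a := by
      have t1 : d ≤ infDist (x (k+l)) (fixedPoints (U istar)) + dist (x k) (x (k+l)) :=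
        infDist_le_infDist_add_dist
      have t2 : dist (x k) (x (k+l)) ≤ ∑ t ∈ Finset.range l, dist (x (k+t)) (x (k+t+1)) :=
        dist_le_range_sum_dist (fun t => x (k+t)) l
      have t2' : ∑ t ∈ Finset.range l, dist (x (k+t)) (x (k+t+1))
          = ∑ t ∈ Finset.range l, ‖x (k+t+1) - x (k+t)‖ := by
        refine Finset.sum_congr rfl fun t _ => ?_
        rw [dist_eq_norm, norm_sub_rev]
      have t3 : δ * infDist (x (k+l)) (fixedPoints (U istar)) ≤ p istar (x (k+l)) :=
        (hbound (x (k+l)) (hball (k+l)) istar).1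
      have t4 : p istar (x (k+l)) ≤ p imax (x (k+l)) := himax istar hmem
      have t5 : p imax (x (k+l)) ≤ Δ * a := (hbound (x (k+l)) (hball (k+l)) imax).2
      have t6 : infDist (x (k+l)) (fixedPoints (U istar)) ≤ (Δ/δ) * a := by
        rw [div_mul_eq_mul_div, le_div_iff₀ hδ]
        calc infDist (x (k+l)) (fixedPoints (U istar)) * δ
            = δ * infDist (x (k+l)) (fixedPoints (U istar)) := mul_comm _ _
          _ ≤ p istar (x (k+l)) := t3
          _ ≤ Δ * a := le_trans t4 t5
      calc d ≤ infDist (x (k+l)) (fixedPoints (U istar)) + dist (x k) (x (k+l)) := t1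
        _ ≤ (Δ/δ)*a + ∑ t ∈ Finset.range l, ‖x (k+t+1) - x (k+t)‖ := by
            rw [t2'] at t2
            exact add_le_add t6 t2
        _ = (∑ t ∈ Finset.range l, ‖x (k+t+1) - x (k+t)‖) + (Δ/δ) * a := by ring
    set wa : ℝ := αminus*(2-αplus)*ωminus with hwadef
    set we : ℝ := (2-αplus)/αplus with hwedef
    have hwa : 0 < wa := by rw [hwadef]; exact mul_pos (mul_pos hαm0 h2αp) hωm0
    have hwe : 0 < we := div_pos h2αp hαp0
    have hsqwa : Real.sqrt wa ≠ 0 := ne_of_gt (Real.sqrt_pos.2 hwa)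
    have hsqwe : Real.sqrt we ≠ 0 := ne_of_gt (Real.sqrt_pos.2 hwe)
    set F : ℕ → ℝ := fun t => if t = l then (Δ/δ)/Real.sqrt wa else 1/Real.sqrt we with hFdef
    set G : ℕ → ℝ := fun t => if t = l then Real.sqrt wa * a
      else Real.sqrt we * ‖x (k+t+1) - x (k+t)‖ with hGdef
    have hsum_fg : ∑ t ∈ Finset.range (l+1), F t * G t
        = (∑ t ∈ Finset.range l, ‖x (k+t+1) - x (k+t)‖) + (Δ/δ) * a := by
      rw [Finset.sum_range_succ]
      congr 1
      · refine Finset.sum_congr rfl fun t ht => ?_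
        have htl : t ≠ l := Nat.ne_of_lt (Finset.mem_range.1 ht)
        simp only [hFdef, hGdef, if_neg htl]
        field_simp
      · simp only [hFdef, hGdef, ↓reduceIte]
        field_simp
    have hG_nn : ∀ t, 0 ≤ G t := by
      intro t
      simp only [hGdef]
      rcases eq_or_ne t l with rfl | htl
      · simp only [if_pos]; positivity
      · rw [if_neg htl]; positivity
    have hFG_nn : 0 ≤ ∑ t ∈ Finset.range (l+1), F t * G t := by
      rw [hsum_fg]
      have : 0 ≤ ∑ t ∈ Finset.range l, ‖x (k+t+1) - x (k+t)‖ :=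
        Finset.sum_nonneg fun t _ => norm_nonneg _
      positivity
    have hsum_F : ∑ t ∈ Finset.range (l+1), (F t)^2 = (l:ℝ)*(1/we) + (Δ/δ)^2/wa := by
      rw [Finset.sum_range_succ]
      congr 1
      · rw [Finset.sum_congr rfl (fun t ht => ?_), Finset.sum_const, Finset.card_range,
          nsmul_eq_mul]
        have htl : t ≠ l := Nat.ne_of_lt (Finset.mem_range.1 ht)
        simp only [hFdef]
        rw [if_neg htl]
        rw [div_pow, one_pow, Real.sq_sqrt hwe.le]
      · simp only [hFdef]
        simp only [if_pos]
        rw [div_pow, Real.sq_sqrt hwa.le]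
    have hsum_G : ∑ t ∈ Finset.range (l+1), (G t)^2 ≤ ∑ t ∈ Finset.range s, D (k+t) := by
      have step1 : ∑ t ∈ Finset.range (l+1), (G t)^2 ≤ ∑ t ∈ Finset.range (l+1), D (k+t) := by
        refine Finset.sum_le_sum fun t ht => ?_
        simp only [hGdef]
        rcases eq_or_ne t l with rfl | htl
        · simp only [if_pos]
          rw [mul_pow, Real.sq_sqrt hwa.le]
          exact hD_a (k+t) imax himaxI
        · rw [if_neg htl]
          rw [mul_pow, Real.sq_sqrt hwe.le]
          exact hD_e (k+t)
      refine le_trans step1 ?_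
      exact Finset.sum_le_sum_of_subset_of_nonneg (Finset.range_subset_range.2 hls)
        (fun t _ _ => hDnn (k+t))
    have hDsum_nn : 0 ≤ ∑ t ∈ Finset.range s, D (k+t) :=
      Finset.sum_nonneg fun t _ => hDnn (k+t)
    have hP : (l:ℝ)*(1/we) + (Δ/δ)^2/wa ≤ (Δ/δ)^2/wa + ((s:ℝ)-1)*(αplus/(2-αplus)) := by
      have h1 : (1:ℝ)/we = αplus/(2-αplus) := by
        rw [hwedef, one_div_div]
      have h2 : (l:ℝ) ≤ (s:ℝ)-1 := by
        have : (l:ℝ) ≤ (s:ℝ) - 1 := by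
          have hls' : l + 1 ≤ s := hls
          have : ((l:ℝ)+1) ≤ (s:ℝ) := by exact_mod_cast hls'
          linarith
        exact this
      have h3 : 0 ≤ αplus/(2-αplus) := by positivity
      rw [h1]
      nlinarith
    have hcs := Finset.sum_mul_sq_le_sq_mul_sq (Finset.range (l+1)) F G
    have hd2 : d^2 ≤ ((Δ/δ)^2/wa + ((s:ℝ)-1)*(αplus/(2-αplus)))
        * (∑ t ∈ Finset.range s, D (k+t)) := by
      have hG2nn : 0 ≤ ∑ t ∈ Finset.range (l+1), (G t)^2 :=
        Finset.sum_nonneg fun t _ => sq_nonneg _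
      have hF2nn : 0 ≤ ∑ t ∈ Finset.range (l+1), (F t)^2 :=
        Finset.sum_nonneg fun t _ => sq_nonneg _
      calc d^2 ≤ (∑ t ∈ Finset.range (l+1), F t * G t)^2 := by
            rw [← hsum_fg] at hchain
            exact pow_le_pow_left₀ hdnn hchain 2
        _ ≤ (∑ t ∈ Finset.range (l+1), (F t)^2) * (∑ t ∈ Finset.range (l+1), (G t)^2) := hcs
        _ ≤ ((Δ/δ)^2/wa + ((s:ℝ)-1)*(αplus/(2-αplus))) * (∑ t ∈ Finset.range s, D (k+t)) := by
            apply mul_le_mul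
            · rw [hsum_F]; exact hP
            · exact hsum_G
            · exact hG2nn
            · exact add_nonneg (by positivity)
                (mul_nonneg (by linarith) (div_nonneg hαp0.le h2αp.le))
    have hrκ : infDist (x k) C ≤ κ * d := by
      have h := hlinreg (x k) (hball k)
      rw [hsup] at h
      exact h
    have hr2 : (infDist (x k) C)^2 ≤ κ^2 * d^2 := by
      calc (infDist (x k) C)^2 ≤ (κ*d)^2 := pow_le_pow_left₀ (hrrnn k) hrκ 2
        _ = κ^2*d^2 := by ring
    have harith := arith_key αminus αplus ωminus δ Δ κ s hαm0 hαm1 hαp1 hαp2 hωm0 hωm1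
      hδ hδΔ hκ1 hs
    calc β * (infDist (x k) C)^2 ≤ β * (κ^2 * d^2) := mul_le_mul_of_nonneg_left hr2 hβnn
      _ = β*κ^2 * d^2 := by ring
      _ ≤ β*κ^2 * (((Δ/δ)^2/wa + ((s:ℝ)-1)*(αplus/(2-αplus)))
            * (∑ t ∈ Finset.range s, D (k+t))) := by
          apply mul_le_mul_of_nonneg_left hd2
          exact mul_nonneg hβnn (sq_nonneg κ)
      _ = (β*κ^2 * ((Δ/δ)^2/wa + ((s:ℝ)-1)*(αplus/(2-αplus))))
            * (∑ t ∈ Finset.range s, D (k+t)) := by ring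
      _ ≤ 1 * (∑ t ∈ Finset.range s, D (k+t)) := by
          apply mul_le_mul_of_nonneg_right _ hDsum_nn
          rw [hβdef, hwadef]
          exact harith
      _ = ∑ t ∈ Finset.range s, D (k+t) := one_mul _
  -- contraction over a block
  have hcontract : ∀ k, (infDist (x (k+s)) C)^2 + β*(infDist (x k) C)^2
      ≤ (infDist (x k) C)^2 := by
    intro k
    have key : ∀ z ∈ C,
        Real.sqrt ((infDist (x (k+s)) C)^2 + β*(infDist (x k) C)^2) ≤ dist (x k) z := by
      intro z hz
      have h1 := htel z hz k s
      have h2 := hblock k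
      have h3 : infDist (x (k+s)) C ≤ ‖x (k+s) - z‖ := by
        rw [← dist_eq_norm]
        exact infDist_le_dist_of_mem hz
      have h4 : (infDist (x (k+s)) C)^2 + β*(infDist (x k) C)^2 ≤ ‖x k - z‖^2 := by
        nlinarith [hrrnn (k+s), norm_nonneg (x (k+s) - z)]
      calc Real.sqrt ((infDist (x (k+s)) C)^2 + β*(infDist (x k) C)^2)
          ≤ Real.sqrt (‖x k - z‖^2) := Real.sqrt_le_sqrt h4
        _ = ‖x k - z‖ := Real.sqrt_sq (norm_nonneg _)
        _ = dist (x k) z := (dist_eq_norm _ _).symm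
    have h5 := le_infDist' hCne key
    have h6 : 0 ≤ (infDist (x (k+s)) C)^2 + β*(infDist (x k) C)^2 := by positivity
    nlinarith [Real.sq_sqrt h6, Real.sqrt_nonneg ((infDist (x (k+s)) C)^2
      + β*(infDist (x k) C)^2), hrrnn k]
  have hstep_s : ∀ k, infDist (x (k+s)) C ≤ q^s * infDist (x k) C := by
    intro k
    have h := hcontract k
    have h2 : (infDist (x (k+s)) C)^2 ≤ (1-β) * (infDist (x k) C)^2 := by nlinarith
    rw [hqs]
    calc infDist (x (k+s)) C = Real.sqrt ((infDist (x (k+s)) C)^2) :=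
          (Real.sqrt_sq (hrrnn _)).symm
      _ ≤ Real.sqrt ((1-β) * (infDist (x k) C)^2) := Real.sqrt_le_sqrt h2
      _ = Real.sqrt (1-β) * infDist (x k) C := by
          rw [Real.sqrt_mul h1β, Real.sqrt_sq (hrrnn _)]
  have hdecay : ∀ n, infDist (x (n*s)) C ≤ q^(n*s) * r := by
    intro n
    induction n with
    | zero => simp [hrdef]
    | succ n ih =>
      have hidx : (n+1)*s = n*s + s := by ring
      rw [hidx]
      calc infDist (x (n*s + s)) C ≤ q^s * infDist (x (n*s)) C := hstep_s (n*s)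
        _ ≤ q^s * (q^(n*s) * r) :=
            mul_le_mul_of_nonneg_left ih (pow_nonneg hq0 s)
        _ = q^(n*s+s) * r := by rw [pow_add]; ring
  have hrrk : ∀ k, infDist (x k) C * q^(s-1) ≤ r * q^k := by
    intro k
    have h1 : (k/s)*s ≤ k := Nat.div_mul_le_self k s
    have h2 : k ≤ (k/s)*s + (s-1) := by
      have hdm := Nat.div_add_mod k s
      have hmod : k % s ≤ s - 1 := Nat.le_sub_one_of_lt (Nat.mod_lt k hs0)
      calc k = s*(k/s) + k%s := hdm.symm
        _ ≤ s*(k/s) + (s-1) := Nat.add_le_add_left hmod _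
        _ = (k/s)*s + (s-1) := by rw [Nat.mul_comm]
    have h3 : infDist (x k) C ≤ q^((k/s)*s) * r :=
      le_trans (hrrmono ((k/s)*s) k h1) (hdecay (k/s))
    have h4 : q^((k/s)*s) * q^(s-1) ≤ q^k := by
      rw [← pow_add]
      exact pow_le_pow_of_le_one hq0 hq1 h2
    calc infDist (x k) C * q^(s-1) ≤ (q^((k/s)*s) * r) * q^(s-1) :=
          mul_le_mul_of_nonneg_right h3 (pow_nonneg hq0 _)
      _ = (q^((k/s)*s) * q^(s-1)) * r := by ring
      _ ≤ q^k * r := mul_le_mul_of_nonneg_right h4 hr.le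
      _ = r * q^k := mul_comm _ _
  have hqpow : 0 < q^(s-1) := by
    rcases eq_or_lt_of_le hs with h1 | h1
    · rw [← h1]
      norm_num
    · have hs2 : (2:ℝ) ≤ (s:ℝ) := by exact_mod_cast h1
      have hβhalf : β ≤ 1/2 := le_trans hβs (by
        rw [div_le_div_iff₀ hsR0 zero_lt_two]; linarith)
      have hqpos : 0 < q := by
        rw [hqdef]
        exact Real.rpow_pos_of_pos (by linarith) _
      exact pow_pos hqpos _
  -- conclusion
  intro k
  have hxkball := hball k
  have hsupp_ge : ∀ i, p i (x k) ≤ Finset.univ.sup' Finset.univ_nonempty fun i => p i (x k) :=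
    fun i => Finset.le_sup' (fun j => p j (x k)) (Finset.mem_univ i)
  constructor
  · -- left inequality
    have h2rr : ‖x k - xinf‖ ≤ 2 * infDist (x k) C := by
      have hhalf : ‖x k - xinf‖/2 ≤ infDist (x k) C := by
        refine le_infDist' hCne fun z hz => ?_
        have hzx : ‖xinf - z‖ ≤ ‖x k - z‖ := by
          have htd : Tendsto (fun j => ‖x j - z‖) atTop (nhds ‖xinf - z‖) :=
            ((hlim.sub_const z).norm)
          refine le_of_tendsto htd ?_
          filter_upwards [eventually_ge_atTop k] with j hj
          exact hfe' z hz k j hj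
        rw [dist_eq_norm]
        have htri : ‖x k - xinf‖ ≤ ‖x k - z‖ + ‖z - xinf‖ := by
          calc ‖x k - xinf‖ = ‖(x k - z) + (z - xinf)‖ := by rw [sub_add_sub_cancel]
            _ ≤ ‖x k - z‖ + ‖z - xinf‖ := norm_add_le _ _
        rw [norm_sub_rev z xinf] at htri
        linarith
      linarith
    have hsd := hlinreg (x k) hxkball
    obtain ⟨i0, -, hsup0⟩ := Finset.exists_mem_eq_sup' (Finset.univ_nonempty (α := Fin m))
      (fun i => infDist (x k) (fixedPoints (U i)))
    have hds : δ * (Finset.univ.sup' Finset.univ_nonempty fun i =>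
        infDist (x k) (fixedPoints (U i)))
        ≤ Finset.univ.sup' Finset.univ_nonempty (fun i => p i (x k)) := by
      rw [hsup0]
      exact le_trans (hbound (x k) hxkball i0).1 (hsupp_ge i0)
    rw [div_mul_eq_mul_div, div_le_iff₀ (by positivity : (0:ℝ) < 2*κ)]
    nlinarith [mul_le_mul_of_nonneg_left h2rr hδ.le,
      mul_le_mul_of_nonneg_left hsd hδ.le, hκ.le,
      mul_le_mul_of_nonneg_left hds (by linarith : (0:ℝ) ≤ 2*κ)]
  · -- right inequality
    have hsupΔ : (Finset.univ.sup' Finset.univ_nonempty fun i => p i (x k))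
        ≤ Δ * infDist (x k) C := by
      refine Finset.sup'_le _ _ fun i _ => ?_
      have h1 := (hbound (x k) hxkball i).2
      have h2 := cutterC i (x k)
      have h3 : infDist (x k) (fixedPoints (U i)) ≤ infDist (x k) C :=
        infDist_le_infDist_of_subset (hCsub i) hCne
      nlinarith
    have hfin : infDist (x k) C ≤ 2*r/(q^(s-1)) * q^k := by
      rw [div_mul_eq_mul_div, le_div_iff₀ hqpow]
      calc infDist (x k) C * q^(s-1) ≤ r * q^k := hrrk k
        _ ≤ 2*r*q^k := by nlinarith [pow_nonneg hq0 k, hr.le]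
    calc (Finset.univ.sup' Finset.univ_nonempty fun i => p i (x k))
        ≤ Δ * infDist (x k) C := hsupΔ
      _ ≤ Δ * (2*r/(q^(s-1)) * q^k) := mul_le_mul_of_nonneg_left hfin hΔ.le
      _ = Δ * (2*r/(q^(s-1))) * q^k := by ring
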